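/- View S¹ as ℝ/ℤ and let f : S¹ → Set S¹ be the at-most-3-valued map with f(x) = {0, 1/2} for x ∉ [1/3, 2/3] and f(x) = {0, 1/2, (3/2)(x − 1/3)} for x ∈ [1/3, 2/3] (all values taken mod 1). Then there is no function w : S¹ × S¹ → ℕ making f into an ℕ-weighted map; that is, there is no w with w(x,y) > 0 exactly when y ∈ f(x) and satisfying the local weight-sum condition: for every open U ⊆ S¹ and x with f(x) ∩ ∂U = ∅ there is a neighborhood V of x with Σ_{y∈U} w(x,y) = Σ_{y∈U} w(z,y) for all z ∈ V. Hence the class of at-most-n-valued maps realized by ℕ-weighted maps is strictly smaller than the class of all at-most-n-valued maps. -/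

import Mathlib

open Set Topology

/-- The "fork" map on the circle `S¹ = ℝ/ℤ`: an at-most-3-valued map whose value
is `{0, 1/2}` off the arc `[1/3, 2/3]`, and `{0, 1/2, (3/2)(t − 1/3)}` at the
point `t ∈ [1/3, 2/3]` (all taken mod 1). -/
def forkMap : UnitAddCircle → Set UnitAddCircle := fun x =>
  {((0 : ℝ) : UnitAddCircle), ((1/2 : ℝ) : UnitAddCircle)} ∪
    {y | ∃ t : ℝ, t ∈ Set.Icc (1/3 : ℝ) (2/3) ∧ x = ((t : ℝ) : UnitAddCircle) ∧
      y = ((3/2 * (t - 1/3) : ℝ) : UnitAddCircle)}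

/-- Two reals are equal in `UnitAddCircle` iff they differ by an integer. -/
lemma forkAux_coe_eq_iff (x y : ℝ) :
    (x : UnitAddCircle) = (y : UnitAddCircle) ↔ ∃ n : ℤ, x - y = n := by
  rw [QuotientAddGroup.eq_iff_sub_mem]
  simp [AddSubgroup.mem_zmultiples_iff, eq_comm]

lemma forkAux_int_window {n : ℤ} (h1 : (-1 : ℝ) < n) (h2 : (n : ℝ) < 1) : (n : ℝ) = 0 := by
  have h1' : (-1 : ℤ) < n := by exact_mod_cast h1
  have h2' : n < 1 := by exact_mod_cast h2
  have : n = 0 := by omega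
  simp [this]

lemma forkAux_eq_of_coe_eq {x y : ℝ} (h : (x : UnitAddCircle) = (y : UnitAddCircle))
    (h1 : -1 < x - y) (h2 : x - y < 1) : x = y := by
  obtain ⟨n, hn⟩ := (forkAux_coe_eq_iff x y).1 h
  have h0 := forkAux_int_window (n := n) (by linarith) (by linarith)
  linarith

/-- A locally constant `ℕ`-valued function on a preconnected set is constant. -/
lemma forkAux_const_of_preconnected {A : Set UnitAddCircle} (hA : IsPreconnected A)
    {g : UnitAddCircle → ℕ}
    (h : ∀ x ∈ A, ∃ V : Set UnitAddCircle, IsOpen V ∧ x ∈ V ∧ ∀ z ∈ V, g z = g x)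
    {a b : UnitAddCircle} (ha : a ∈ A) (hb : b ∈ A) : g a = g b := by
  by_contra hne
  choose! V hVo hxV hVc using h
  set u := ⋃ x ∈ {x | x ∈ A ∧ g x = g a}, V x with hu
  set v := ⋃ x ∈ {x | x ∈ A ∧ g x ≠ g a}, V x with hv
  have hou : IsOpen u := isOpen_biUnion fun x hx => hVo x hx.1
  have hov : IsOpen v := isOpen_biUnion fun x hx => hVo x hx.1
  have hcov : A ⊆ u ∪ v := by
    intro x hx
    by_cases hgx : g x = g a
    · exact Or.inl (mem_biUnion (show x ∈ {x | x ∈ A ∧ g x = g a} from ⟨hx, hgx⟩) (hxV x hx))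
    · exact Or.inr (mem_biUnion (show x ∈ {x | x ∈ A ∧ g x ≠ g a} from ⟨hx, hgx⟩) (hxV x hx))
  have h1 : (A ∩ u).Nonempty :=
    ⟨a, ha, mem_biUnion (show a ∈ {x | x ∈ A ∧ g x = g a} from ⟨ha, rfl⟩) (hxV a ha)⟩
  have h2 : (A ∩ v).Nonempty :=
    ⟨b, hb, mem_biUnion (show b ∈ {x | x ∈ A ∧ g x ≠ g a} from ⟨hb, fun hgb => hne hgb.symm⟩)
      (hxV b hb)⟩
  obtain ⟨z, hzA, hzu, hzv⟩ := hA u v hou hov hcov h1 h2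
  obtain ⟨x, hx, hzx⟩ := mem_iUnion₂.1 hzu
  obtain ⟨x', hx', hzx'⟩ := mem_iUnion₂.1 hzv
  have e1 : g z = g x := hVc x hx.1 z hzx
  have e2 : g z = g x' := hVc x' hx'.1 z hzx'
  exact hx'.2 (by rw [← e2, e1, hx.2])

/-- Theorem: there is no weight function `w : S¹ × S¹ → ℕ` making the fork map
into an `ℕ`-weighted map, i.e. no `w` which is strictly positive exactly on the
graph of the fork map and satisfies the local weight-sum condition: for every
open `U ⊆ S¹` and every `x` with `forkMap x ∩ ∂U = ∅` there is a neighborhood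
`V` of `x` on which the sums `Σ_{y∈U} w(·,y)` agree with the sum at `x`.
Hence the class of at-most-`n`-valued maps realized by `ℕ`-weighted maps is
strictly smaller than the class of all at-most-`n`-valued maps. -/
theorem forkMap_not_weighted :
    ¬ ∃ w : UnitAddCircle → UnitAddCircle → ℕ,
      (∀ x y, 0 < w x y ↔ y ∈ forkMap x) ∧
      (∀ U : Set UnitAddCircle, IsOpen U → ∀ x : UnitAddCircle,
        forkMap x ∩ frontier U = ∅ →
          ∃ V : Set UnitAddCircle, IsOpen V ∧ x ∈ V ∧
            ∀ z ∈ V, ∑ᶠ y ∈ U, w x y = ∑ᶠ y ∈ U, w z y) := by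
  classical
  rintro ⟨w, hw1, hw2⟩
  have hcont : Continuous (fun t : ℝ => (t : UnitAddCircle)) := AddCircle.continuous_mk' 1
  -- notation for the three key points
  set z0 : UnitAddCircle := ((0 : ℝ) : UnitAddCircle) with hz0def
  set zh : UnitAddCircle := ((1/2 : ℝ) : UnitAddCircle) with hzhdef
  set zq : UnitAddCircle := ((1/4 : ℝ) : UnitAddCircle) with hzqdef
  -- distinctness
  have hne : ∀ x y : ℝ, -1 < x - y → x - y < 1 → x ≠ y →
      (x : UnitAddCircle) ≠ (y : UnitAddCircle) :=
    fun x y h1 h2 h3 h => h3 (forkAux_eq_of_coe_eq h h1 h2)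
  have hz0h : z0 ≠ zh := hne 0 (1/2) (by norm_num) (by norm_num) (by norm_num)
  have hz0q : z0 ≠ zq := hne 0 (1/4) (by norm_num) (by norm_num) (by norm_num)
  have hzhq : zh ≠ zq := hne (1/2) (1/4) (by norm_num) (by norm_num) (by norm_num)
  -- support of the weights
  have hsupp : ∀ x, Function.support (w x) = forkMap x := by
    intro x; ext y
    rw [Function.mem_support, ← hw1, Nat.pos_iff_ne_zero]
  -- values of forkMap at 0 and 1/2
  have hf0 : forkMap z0 = {z0, zh} := by
    rw [forkMap]
    have : {y | ∃ t : ℝ, t ∈ Set.Icc (1/3 : ℝ) (2/3) ∧ z0 = ((t : ℝ) : UnitAddCircle) ∧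
        y = ((3/2 * (t - 1/3) : ℝ) : UnitAddCircle)} = (∅ : Set UnitAddCircle) := by
      ext y
      simp only [mem_setOf_eq, mem_empty_iff_false, iff_false, not_exists]
      rintro t ⟨⟨ht1, ht2⟩, hxt, -⟩
      have : (0 : ℝ) = t := forkAux_eq_of_coe_eq hxt (by linarith) (by linarith)
      linarith
    rw [this, union_empty]
  have hfh : forkMap zh = {z0, zh, zq} := by
    rw [forkMap]
    ext y
    simp only [mem_union, mem_insert_iff, mem_singleton_iff, mem_setOf_eq]
    constructor
    · rintro ((rfl | rfl) | ⟨t, ⟨ht1, ht2⟩, hxt, rfl⟩)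
      · exact Or.inl rfl
      · exact Or.inr (Or.inl rfl)
      · have ht : (1/2 : ℝ) = t := forkAux_eq_of_coe_eq hxt (by linarith) (by linarith)
        refine Or.inr (Or.inr ?_)
        rw [hzqdef]
        norm_num [← ht]
    · rintro (rfl | rfl | rfl)
      · exact Or.inl (Or.inl rfl)
      · exact Or.inl (Or.inr rfl)
      · refine Or.inr ⟨1/2, ⟨by norm_num, by norm_num⟩, rfl, ?_⟩
        rw [hzqdef]
        norm_num
  -- the two test arcs and the two path arcs
  set U1 : Set UnitAddCircle := (fun t : ℝ => (t : UnitAddCircle)) '' Ioo (-(1/5)) (1/5)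
    with hU1def
  set U2 : Set UnitAddCircle := (fun t : ℝ => (t : UnitAddCircle)) '' Ioo (3/10) (7/10)
    with hU2def
  set A1 : Set UnitAddCircle := (fun t : ℝ => (t : UnitAddCircle)) '' Icc (1/2) 1 with hA1def
  set A2 : Set UnitAddCircle := (fun t : ℝ => (t : UnitAddCircle)) '' Icc 0 (1/2) with hA2def
  have hU1o : IsOpen U1 := QuotientAddGroup.isOpenMap_coe _ isOpen_Ioo
  have hU2o : IsOpen U2 := QuotientAddGroup.isOpenMap_coe _ isOpen_Ioo
  -- a criterion for non-membership in the closed arcs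
  have key : ∀ a b r : ℝ, -1 < a - r → b - r < 1 → (r < a ∨ b < r) →
      (r : UnitAddCircle) ∉ (fun t : ℝ => (t : UnitAddCircle)) '' Icc a b := by
    rintro a b r h1 h2 h3 ⟨s, ⟨hs1, hs2⟩, hsr⟩
    have hs : s = r := forkAux_eq_of_coe_eq hsr (by linarith) (by linarith)
    rcases h3 with h | h <;> linarith
  have hclos : ∀ a b : ℝ,
      closure ((fun t : ℝ => (t : UnitAddCircle)) '' Ioo a b) ⊆
        (fun t : ℝ => (t : UnitAddCircle)) '' Icc a b := fun a b =>
    closure_minimal (image_mono Ioo_subset_Icc_self)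
      ((isCompact_Icc.image hcont).isClosed)
  have hU1sub : U1 ⊆ (fun t : ℝ => (t : UnitAddCircle)) '' Icc (-(1/5)) (1/5) :=
    image_mono Ioo_subset_Icc_self
  have hU2sub : U2 ⊆ (fun t : ℝ => (t : UnitAddCircle)) '' Icc (3/10) (7/10) :=
    image_mono Ioo_subset_Icc_self
  -- memberships
  have hz0U1 : z0 ∈ U1 := ⟨0, by norm_num, rfl⟩
  have hzhU2 : zh ∈ U2 := ⟨1/2, by norm_num, rfl⟩
  have hzhU1 : zh ∉ U1 := fun h => key _ _ _ (by norm_num) (by norm_num) (by norm_num) (hU1sub h)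
  have hzqU1 : zq ∉ U1 := fun h => key _ _ _ (by norm_num) (by norm_num) (by norm_num) (hU1sub h)
  have hz0U2 : z0 ∉ U2 := fun h => key _ _ _ (by norm_num) (by norm_num) (by norm_num) (hU2sub h)
  have hzqU2 : zq ∉ U2 := fun h => key _ _ _ (by norm_num) (by norm_num) (by norm_num) (hU2sub h)
  -- frontier conditions along the two paths
  have hfr1 : ∀ x ∈ A1, forkMap x ∩ frontier U1 = ∅ := by
    rintro x ⟨t, ⟨ht1, ht2⟩, rfl⟩
    apply eq_empty_iff_forall_notMem.2
    rintro y ⟨hyf, hyfr⟩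
    have hycl : y ∈ closure U1 := frontier_subset_closure hyfr
    have hyU : y ∉ U1 := fun h => hyfr.2 (by rwa [hU1o.interior_eq])
    simp only [forkMap, mem_union, mem_insert_iff, mem_singleton_iff, mem_setOf_eq] at hyf
    rcases hyf with (rfl | rfl) | ⟨t', ⟨ht1', ht2'⟩, hxt, rfl⟩
    · exact hyU hz0U1
    · exact key _ _ _ (by norm_num) (by norm_num) (by norm_num) (hclos _ _ hycl)
    · have htt : t = t' := forkAux_eq_of_coe_eq hxt (by linarith) (by linarith)
      exact key _ _ _ (by linarith) (by linarith) (Or.inr (by linarith)) (hclos _ _ hycl)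
  have hfr2 : ∀ x ∈ A2, forkMap x ∩ frontier U2 = ∅ := by
    rintro x ⟨t, ⟨ht1, ht2⟩, rfl⟩
    apply eq_empty_iff_forall_notMem.2
    rintro y ⟨hyf, hyfr⟩
    have hycl : y ∈ closure U2 := frontier_subset_closure hyfr
    have hyU : y ∉ U2 := fun h => hyfr.2 (by rwa [hU2o.interior_eq])
    simp only [forkMap, mem_union, mem_insert_iff, mem_singleton_iff, mem_setOf_eq] at hyf
    rcases hyf with (rfl | rfl) | ⟨t', ⟨ht1', ht2'⟩, hxt, rfl⟩
    · exact key _ _ _ (by norm_num) (by norm_num) (by norm_num) (hclos _ _ hycl)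
    · exact hyU hzhU2
    · have htt : t = t' := forkAux_eq_of_coe_eq hxt (by linarith) (by linarith)
      exact key _ _ _ (by linarith) (by linarith) (Or.inl (by linarith)) (hclos _ _ hycl)
  -- constancy along the two paths
  have hA1pre : IsPreconnected A1 := isPreconnected_Icc.image _ hcont.continuousOn
  have hA2pre : IsPreconnected A2 := isPreconnected_Icc.image _ hcont.continuousOn
  have hz0A2 : z0 ∈ A2 := ⟨0, by norm_num, rfl⟩
  have hzhA2 : zh ∈ A2 := ⟨1/2, by norm_num, rfl⟩
  have hzhA1 : zh ∈ A1 := ⟨1/2, by norm_num, rfl⟩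
  have hz0A1 : z0 ∈ A1 := ⟨1, by norm_num, ((forkAux_coe_eq_iff 1 0).2 ⟨1, by norm_num⟩)⟩
  have hconst : ∀ (A : Set UnitAddCircle), IsPreconnected A →
      ∀ (U : Set UnitAddCircle), IsOpen U → (∀ x ∈ A, forkMap x ∩ frontier U = ∅) →
      ∀ a ∈ A, ∀ b ∈ A, (∑ᶠ y ∈ U, w a y) = ∑ᶠ y ∈ U, w b y := by
    intro A hA U hUo hfr a ha b hb
    refine forkAux_const_of_preconnected hA (g := fun x => ∑ᶠ y ∈ U, w x y) ?_ ha hb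
    intro x hx
    obtain ⟨V, hVo, hxV, hV⟩ := hw2 U hUo x (hfr x hx)
    exact ⟨V, hVo, hxV, fun z hz => (hV z hz).symm⟩
  -- evaluating the finsums
  have hsum : ∀ (x : UnitAddCircle) (U : Set UnitAddCircle) (t : Finset UnitAddCircle),
      U ∩ forkMap x = ↑t → (↑t : Set UnitAddCircle) ⊆ forkMap x →
      (∑ᶠ y ∈ U, w x y) = ∑ y ∈ t, w x y := by
    intro x U t h hsub
    apply finsum_mem_eq_sum_of_inter_support_eq
    rw [hsupp x, h]
    exact (inter_eq_left.mpr hsub).symm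
  have e1 : (∑ᶠ y ∈ U1, w z0 y) = w z0 z0 := by
    rw [hsum z0 U1 {z0} ?_ ?_, Finset.sum_singleton]
    · rw [hf0]
      ext y
      simp only [mem_inter_iff, mem_insert_iff, mem_singleton_iff, Finset.coe_singleton]
      constructor
      · rintro ⟨hyU, rfl | rfl⟩
        · rfl
        · exact absurd hyU hzhU1
      · rintro rfl
        exact ⟨hz0U1, Or.inl rfl⟩
    · rw [hf0]
      simp
  have e2 : (∑ᶠ y ∈ U1, w zh y) = w zh z0 := by
    rw [hsum zh U1 {z0} ?_ ?_, Finset.sum_singleton]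
    · rw [hfh]
      ext y
      simp only [mem_inter_iff, mem_insert_iff, mem_singleton_iff, Finset.coe_singleton]
      constructor
      · rintro ⟨hyU, rfl | rfl | rfl⟩
        · rfl
        · exact absurd hyU hzhU1
        · exact absurd hyU hzqU1
      · rintro rfl
        exact ⟨hz0U1, Or.inl rfl⟩
    · rw [hfh]
      simp
  have e3 : (∑ᶠ y ∈ U2, w z0 y) = w z0 zh := by
    rw [hsum z0 U2 {zh} ?_ ?_, Finset.sum_singleton]
    · rw [hf0]
      ext y
      simp only [mem_inter_iff, mem_insert_iff, mem_singleton_iff, Finset.coe_singleton]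
      constructor
      · rintro ⟨hyU, rfl | rfl⟩
        · exact absurd hyU hz0U2
        · rfl
      · rintro rfl
        exact ⟨hzhU2, Or.inr rfl⟩
    · rw [hf0]
      simp
  have e4 : (∑ᶠ y ∈ U2, w zh y) = w zh zh := by
    rw [hsum zh U2 {zh} ?_ ?_, Finset.sum_singleton]
    · rw [hfh]
      ext y
      simp only [mem_inter_iff, mem_insert_iff, mem_singleton_iff, Finset.coe_singleton]
      constructor
      · rintro ⟨hyU, rfl | rfl | rfl⟩
        · exact absurd hyU hz0U2
        · rfl
        · exact absurd hyU hzqU2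
      · rintro rfl
        exact ⟨hzhU2, Or.inr (Or.inl rfl)⟩
    · rw [hfh]
      simp
  have e5 : (∑ᶠ y ∈ (univ : Set UnitAddCircle), w z0 y) = w z0 z0 + w z0 zh := by
    rw [hsum z0 univ {z0, zh} ?_ ?_, Finset.sum_pair hz0h]
    · rw [hf0, univ_inter]
      simp
    · rw [hf0]
      intro y hy
      simpa using hy
  have e6 : (∑ᶠ y ∈ (univ : Set UnitAddCircle), w zh y) = w zh z0 + w zh zh + w zh zq := by
    have hnot : z0 ∉ ({zh, zq} : Finset UnitAddCircle) := by
      simp [hz0h, hz0q]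
    rw [hsum zh univ {z0, zh, zq} ?_ ?_, Finset.sum_insert hnot, Finset.sum_pair hzhq,
      ← add_assoc]
    · rw [hfh, univ_inter]
      simp
    · rw [hfh]
      intro y hy
      simpa using hy
  -- combine everything
  have c1 : w zh z0 = w z0 z0 := by
    have := hconst A1 hA1pre U1 hU1o hfr1 zh hzhA1 z0 hz0A1
    rwa [e1, e2] at this
  have c2 : w z0 zh = w zh zh := by
    have := hconst A2 hA2pre U2 hU2o hfr2 z0 hz0A2 zh hzhA2
    rwa [e3, e4] at this
  have c3 : w z0 z0 + w z0 zh = w zh z0 + w zh zh + w zh zq := by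
    have := hconst A2 hA2pre univ isOpen_univ (fun x _ => by simp [frontier_univ])
      z0 hz0A2 zh hzhA2
    rwa [e5, e6] at this
  have hpos : 0 < w zh zq := (hw1 zh zq).2 (by rw [hfh]; simp)
  omega
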